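/- Let e1, e2, e3 be the standard basis of ℚ³ and let a, b be two of them with a ≠ b, and c the third. Set w = a + b. Then Cone{a,w,c} ∪ Cone{w,b,c} = Cone{a,b,c}, and the interiors of Cone{a,w,c} and Cone{w,b,c} are disjoint. -/
import Mathlib


def Cone3 (a b c : Fin 3 → ℚ) : Set (Fin 3 → ℚ) :=
  {x | ∃ s t u : ℚ, 0 ≤ s ∧ 0 ≤ t ∧ 0 ≤ u ∧ x = s • a + t • b + u • c}

def ConeInt3 (a b c : Fin 3 → ℚ) : Set (Fin 3 → ℚ) :=
  {x | ∃ s t u : ℚ, 0 < s ∧ 0 < t ∧ 0 < u ∧ x = s • a + t • b + u • c}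

theorem stmt_8 (e : Fin 3 → Fin 3 → ℚ) (he : ∀ i, e i = Pi.single i 1)
    (σ : Equiv.Perm (Fin 3)) (a b c : Fin 3 → ℚ)
    (ha : a = e (σ 0)) (hb : b = e (σ 1)) (hc : c = e (σ 2)) :
    Cone3 a (a + b) c ∪ Cone3 (a + b) b c = Cone3 a b c ∧
    ConeInt3 a (a + b) c ∩ ConeInt3 (a + b) b c = ∅ := by
  subst ha hb hc
  have h10 : σ 1 ≠ σ 0 := fun h => by simpa using σ.injective h
  have h20 : σ 2 ≠ σ 0 := fun h => by simpa using σ.injective h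
  have h01 : σ 0 ≠ σ 1 := fun h => by simpa using σ.injective h
  have h21 : σ 2 ≠ σ 1 := fun h => by simpa using σ.injective h
  have hA0 : e (σ 0) (σ 0) = 1 := by simp [he]
  have hB0 : e (σ 1) (σ 0) = 0 := by simp [he, Pi.single_apply, h01]
  have hC0 : e (σ 2) (σ 0) = 0 := by simp [he, Pi.single_apply, h20]
  have hA1 : e (σ 0) (σ 1) = 0 := by simp [he, Pi.single_apply, h10]
  have hB1 : e (σ 1) (σ 1) = 1 := by simp [he]
  have hC1 : e (σ 2) (σ 1) = 0 := by simp [he, Pi.single_apply, h21]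
  constructor
  · ext x
    constructor
    · rintro (⟨s, t, u, hs, ht, hu, rfl⟩ | ⟨s, t, u, hs, ht, hu, rfl⟩)
      · exact ⟨s + t, t, u, by linarith, ht, hu, by module⟩
      · exact ⟨s, s + t, u, hs, by linarith, hu, by module⟩
    · rintro ⟨s, t, u, hs, ht, hu, rfl⟩
      rcases le_total t s with h | h
      · exact Or.inl ⟨s - t, t, u, by linarith, ht, hu, by module⟩
      · exact Or.inr ⟨s, t - s, u, hs, by linarith, hu, by module⟩
  · ext x
    simp only [Set.mem_inter_iff, Set.mem_empty_iff_false, iff_false, not_and]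
    rintro ⟨s, t, u, hs, ht, hu, hx⟩ ⟨s', t', u', hs', ht', hu', hx'⟩
    have hxx := hx.symm.trans hx'
    have e0 := congrFun hxx (σ 0)
    have e1 := congrFun hxx (σ 1)
    simp only [Pi.add_apply, Pi.smul_apply, smul_eq_mul, hA0, hB0, hC0, hA1, hB1, hC1,
      mul_one, mul_zero, add_zero, zero_add, mul_add] at e0 e1
    linarith
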